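/- Every nontrivial tree T has bondage number b(T) ≤ 2. -/

import Mathlib

open SimpleGraph

variable {V : Type*}

/-- `S` is a dominating set of `G`: every vertex is in `S` or has a neighbor in `S`. -/
def SimpleGraph.IsDomSet (G : SimpleGraph V) (S : Finset V) : Prop :=
  ∀ v : V, v ∈ S ∨ ∃ u ∈ S, G.Adj u v

/-- The domination number of a finite graph. -/
noncomputable def SimpleGraph.domNum [Fintype V] (G : SimpleGraph V) : ℕ :=
  sInf {n | ∃ S : Finset V, S.card = n ∧ G.IsDomSet S}

/-- The bondage number: the minimum size of a set of edges of `G` whose removal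
increases the domination number. -/
noncomputable def SimpleGraph.bondageNum [Fintype V] (G : SimpleGraph V) : ℕ :=
  sInf {n | ∃ B : Finset (Sym2 V), B.card = n ∧ ↑B ⊆ G.edgeSet ∧
    G.domNum < (G.deleteEdges ↑B).domNum}

namespace BondageAux

open SimpleGraph Walk Finset

variable {G : SimpleGraph V}

lemma deleteEdges_adj' {s : Set (Sym2 V)} {x y : V} (h : (G.deleteEdges s).Adj x y) :
    G.Adj x y ∧ s(x, y) ∉ s := by rwa [SimpleGraph.deleteEdges_adj] at h

/-! ### Domination number basics -/

lemma domNum_le [Fintype V] {S : Finset V} (h : G.IsDomSet S) : G.domNum ≤ S.card :=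
  Nat.sInf_le ⟨S, rfl, h⟩

lemma exists_domNum_set [Fintype V] (G : SimpleGraph V) :
    ∃ S : Finset V, S.card = G.domNum ∧ G.IsDomSet S :=
  Nat.sInf_mem (⟨Finset.univ.card, Finset.univ, rfl, fun v => Or.inl (Finset.mem_univ v)⟩ :
    {n | ∃ S : Finset V, S.card = n ∧ G.IsDomSet S}.Nonempty)

lemma bondageNum_le_card [Fintype V] {B : Finset (Sym2 V)} (hB : ↑B ⊆ G.edgeSet)
    (hlt : G.domNum < (G.deleteEdges ↑B).domNum) : G.bondageNum ≤ B.card :=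
  Nat.sInf_le ⟨B, rfl, hB, hlt⟩

/-! ### Bondage arguments for the two structural cases -/

/-- If `v` has two leaf neighbors, removing one leaf edge increases the domination number. -/
lemma bondage_case_two_leaves [Fintype V] {v a b : V}
    (hab : a ≠ b)
    (ha : G.Adj v a) (hla : ∀ x, G.Adj a x → x = v)
    (hb : G.Adj v b) (hlb : ∀ x, G.Adj b x → x = v) :
    G.bondageNum ≤ 2 := by
  classical
  set B : Finset (Sym2 V) := {s(v, a)} with hBdef
  have hBe : ↑B ⊆ G.edgeSet := by
    intro e he
    simp only [hBdef, Finset.coe_singleton, Set.mem_singleton_iff] at he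
    subst he
    exact ha
  set G' := G.deleteEdges ↑B with hG'
  have hGadj : ∀ x y, G'.Adj x y → G.Adj x y := fun x y h => (deleteEdges_adj' h).1
  have haiso : ∀ x, ¬ G'.Adj x a := by
    intro x hx
    obtain ⟨hx1, hx2⟩ := deleteEdges_adj' hx
    have hxv : x = v := hla x hx1.symm
    subst hxv
    exact hx2 (by simp [hBdef])
  obtain ⟨D, hDcard, hDdom⟩ := exists_domNum_set G'
  have haD : a ∈ D := by
    rcases hDdom a with h | ⟨x, hxD, hx⟩
    · exact h
    · exact absurd hx (haiso x)
  have hDpos : 0 < D.card := Finset.card_pos.mpr ⟨a, haD⟩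
  have key : ∃ S : Finset V, G.IsDomSet S ∧ S.card < D.card := by
    by_cases hvD : v ∈ D
    · refine ⟨D.erase a, ?_, ?_⟩
      · intro w
        by_cases hw : w = a
        · subst hw
          exact Or.inr ⟨v, Finset.mem_erase.mpr ⟨ha.ne, hvD⟩, ha⟩
        · rcases hDdom w with h | ⟨x, hxD, hx⟩
          · exact Or.inl (Finset.mem_erase.mpr ⟨hw, h⟩)
          · have hxa : x ≠ a := by
              rintro rfl
              exact haiso w hx.symm
            exact Or.inr ⟨x, Finset.mem_erase.mpr ⟨hxa, hxD⟩, hGadj x w hx⟩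
      · rw [Finset.card_erase_of_mem haD]
        exact Nat.sub_lt hDpos one_pos
    · have hbD : b ∈ D := by
        rcases hDdom b with h | ⟨x, hxD, hx⟩
        · exact h
        · have hxv : x = v := hlb x (hGadj x b hx).symm
          subst hxv
          exact absurd hxD hvD
      have hD2 : 2 ≤ D.card := Finset.one_lt_card.mpr ⟨a, haD, b, hbD, hab⟩
      refine ⟨insert v ((D.erase a).erase b), ?_, ?_⟩
      · intro w
        by_cases hwa : w = a
        · subst hwa
          exact Or.inr ⟨v, Finset.mem_insert_self _ _, ha⟩
        by_cases hwb : w = b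
        · subst hwb
          exact Or.inr ⟨v, Finset.mem_insert_self _ _, hb⟩
        by_cases hwv : w = v
        · subst hwv
          exact Or.inl (Finset.mem_insert_self _ _)
        rcases hDdom w with h | ⟨x, hxD, hx⟩
        · exact Or.inl (Finset.mem_insert_of_mem
            (Finset.mem_erase.mpr ⟨hwb, Finset.mem_erase.mpr ⟨hwa, h⟩⟩))
        · have hxa : x ≠ a := by
            rintro rfl
            exact haiso w hx.symm
          have hxb : x ≠ b := by
            rintro rfl
            exact hwv (hlb w (hGadj _ _ hx))
          exact Or.inr ⟨x, Finset.mem_insert_of_mem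
            (Finset.mem_erase.mpr ⟨hxb, Finset.mem_erase.mpr ⟨hxa, hxD⟩⟩), hGadj x w hx⟩
      · have e1 : (D.erase a).card = D.card - 1 := Finset.card_erase_of_mem haD
        have e2 : ((D.erase a).erase b).card = (D.erase a).card - 1 :=
          Finset.card_erase_of_mem (Finset.mem_erase.mpr ⟨hab.symm, hbD⟩)
        have e3 := Finset.card_insert_le v ((D.erase a).erase b)
        omega
  obtain ⟨S, hS, hlt⟩ := key
  have h1 : G.domNum < G'.domNum := lt_of_le_of_lt (domNum_le hS) (by rw [← hDcard] at *; exact hlt)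
  have h2 := bondageNum_le_card hBe h1
  have : B.card = 1 := Finset.card_singleton _
  omega

/-- If `v` has a leaf neighbor `u` and all neighbors of `v` lie in `{u, w}`,
removing the (at most two) edges at `v` increases the domination number. -/
lemma bondage_case_leaf [Fintype V] {v u w : V}
    (hu : G.Adj v u) (hlu : ∀ x, G.Adj u x → x = v)
    (hv : ∀ x, G.Adj v x → x = u ∨ x = w) :
    G.bondageNum ≤ 2 := by
  classical
  set B : Finset (Sym2 V) := {s(v, u), s(v, w)} ∩ G.edgeFinset with hBdef
  have hBe : ↑B ⊆ G.edgeSet := by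
    intro e he
    simp only [hBdef, Finset.coe_inter, Set.mem_inter_iff, Finset.mem_coe,
      SimpleGraph.mem_edgeFinset] at he
    exact he.2
  have hBcard : B.card ≤ 2 := by
    calc B.card ≤ ({s(v, u), s(v, w)} : Finset (Sym2 V)).card :=
          Finset.card_le_card (Finset.inter_subset_left)
      _ ≤ 2 := Finset.card_insert_le _ _ |>.trans (by simp)
  set G' := G.deleteEdges ↑B with hG'
  have hGadj : ∀ x y, G'.Adj x y → G.Adj x y := fun x y h => (deleteEdges_adj' h).1
  have hmemB : ∀ x, G.Adj v x → s(v, x) ∈ (↑B : Set (Sym2 V)) := by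
    intro x hx
    rcases hv x hx with h | h <;> subst h <;>
      simp [hBdef, SimpleGraph.mem_edgeFinset, hx]
  have hviso : ∀ x, ¬ G'.Adj x v := by
    intro x hx
    obtain ⟨hx1, hx2⟩ := deleteEdges_adj' hx
    have : s(v, x) ∈ (↑B : Set (Sym2 V)) := hmemB x hx1.symm
    exact hx2 (by rwa [Sym2.eq_swap])
  have huiso : ∀ x, ¬ G'.Adj x u := by
    intro x hx
    obtain ⟨hx1, hx2⟩ := deleteEdges_adj' hx
    have hxv : x = v := hlu x hx1.symm
    subst hxv
    exact hx2 (hmemB u hu)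
  obtain ⟨D, hDcard, hDdom⟩ := exists_domNum_set G'
  have huD : u ∈ D := by
    rcases hDdom u with h | ⟨x, hxD, hx⟩
    · exact h
    · exact absurd hx (huiso x)
  have hvD : v ∈ D := by
    rcases hDdom v with h | ⟨x, hxD, hx⟩
    · exact h
    · exact absurd hx (hviso x)
  have hDpos : 0 < D.card := Finset.card_pos.mpr ⟨u, huD⟩
  have hS : G.IsDomSet (D.erase u) := by
    intro x
    by_cases hx : x = u
    · subst hx
      exact Or.inr ⟨v, Finset.mem_erase.mpr ⟨hu.ne, hvD⟩, hu⟩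
    · rcases hDdom x with h | ⟨y, hyD, hy⟩
      · exact Or.inl (Finset.mem_erase.mpr ⟨hx, h⟩)
      · have hyu : y ≠ u := by
          rintro rfl
          exact huiso x hy.symm
        exact Or.inr ⟨y, Finset.mem_erase.mpr ⟨hyu, hyD⟩, hGadj y x hy⟩
  have h1 : G.domNum < G'.domNum := by
    have := domNum_le hS
    rw [Finset.card_erase_of_mem huD] at this
    omega
  have h2 := bondageNum_le_card hBe h1
  omega

/-! ### Tree structure lemmas -/

lemma exists_path_length_dist (hc : G.Connected) (r x : V) :
    ∃ p : G.Walk r x, p.IsPath ∧ p.length = G.dist r x := by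
  classical
  obtain ⟨q, hq⟩ := (hc.preconnected r x).exists_walk_length_eq_dist
  exact ⟨q.bypass, q.bypass_isPath,
    le_antisymm (hq ▸ q.length_bypass_le) (SimpleGraph.dist_le _)⟩

lemma dist_le_length_of_mem_support {r b x : V} (p : G.Walk r b) (h : x ∈ p.support) :
    G.dist r x ≤ p.length := by
  classical
  exact le_trans (SimpleGraph.dist_le (p.takeUntil x h)) (p.length_takeUntil_le h)

lemma dist_lt_length_of_mem_support {r b x : V} (p : G.Walk r b) (h : x ∈ p.support)
    (hxb : x ≠ b) : G.dist r x < p.length := by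
  classical
  have h1 := congrArg Walk.length (p.take_spec h)
  rw [Walk.length_append] at h1
  have h2 : (p.dropUntil x h).length ≠ 0 := fun h0 => hxb (Walk.eq_of_length_eq_zero h0)
  have h3 := SimpleGraph.dist_le (p.takeUntil x h)
  omega

lemma isPath_concat {u v w : V} {p : G.Walk u v} (hp : p.IsPath) (h : G.Adj v w)
    (hw : w ∉ p.support) : (p.concat h).IsPath := by
  rw [Walk.isPath_def, Walk.support_concat]
  rw [List.nodup_append]
  exact ⟨hp.support_nodup, List.nodup_singleton _, by simp only [List.mem_singleton]; rintro a ha b rfl rfl; exact hw ha⟩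

/-- In a tree, adjacent vertices have different distances to any root. -/
lemma tree_adj_dist_ne (hT : G.IsTree) (r : V) {a b : V} (hab : G.Adj a b) :
    G.dist r a ≠ G.dist r b := by
  intro he
  obtain ⟨pa, hpa, hla⟩ := exists_path_length_dist hT.isConnected r a
  obtain ⟨pb, hpb, hlb⟩ := exists_path_length_dist hT.isConnected r b
  by_cases hmem : a ∈ pb.support
  · have := dist_lt_length_of_mem_support pb hmem hab.ne
    omega
  · have hconc : (pb.concat hab.symm).IsPath := isPath_concat hpb hab.symm hmem
    have heq : pb.concat hab.symm = pa := (hT.existsUnique_path r a).unique hconc hpa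
    have hlen := congrArg Walk.length heq
    rw [Walk.length_concat] at hlen
    omega

/-- In a tree, a vertex has at most one neighbor strictly closer to the root. -/
lemma tree_parent_unique (hT : G.IsTree) (r : V) {x w1 w2 : V}
    (h1 : G.Adj x w1) (h2 : G.Adj x w2)
    (hd1 : G.dist r w1 + 1 = G.dist r x) (hd2 : G.dist r w2 + 1 = G.dist r x) :
    w1 = w2 := by
  obtain ⟨p1, hp1, hl1⟩ := exists_path_length_dist hT.isConnected r w1
  obtain ⟨p2, hp2, hl2⟩ := exists_path_length_dist hT.isConnected r w2
  have hm1 : x ∉ p1.support := fun h => by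
    have := dist_le_length_of_mem_support p1 h; omega
  have hm2 : x ∉ p2.support := fun h => by
    have := dist_le_length_of_mem_support p2 h; omega
  have hq1 : (p1.concat h1.symm).IsPath := isPath_concat hp1 h1.symm hm1
  have hq2 : (p2.concat h2.symm).IsPath := isPath_concat hp2 h2.symm hm2
  have heq : p1.concat h1.symm = p2.concat h2.symm :=
    (hT.existsUnique_path r x).unique hq1 hq2
  have hsup := congrArg Walk.support heq
  rw [Walk.support_concat, Walk.support_concat] at hsup
  have hsup' : p1.support = p2.support := List.append_left_injective _ hsup
  have g1 : p1.support.getLast? = some w1 := by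
    rw [List.getLast?_eq_getLast_of_ne_nil (Walk.support_ne_nil _), Walk.getLast_support]
  have g2 : p2.support.getLast? = some w2 := by
    rw [List.getLast?_eq_getLast_of_ne_nil (Walk.support_ne_nil _), Walk.getLast_support]
  rw [hsup', g2] at g1
  exact (Option.some.injEq _ _ ▸ g1 : w2 = w1).symm

/-- A vertex at maximal distance from `r` in a tree is a leaf, with a unique neighbor
one step closer to `r`. -/
lemma exists_parent (hT : G.IsTree) {r v0 : V} (hne : v0 ≠ r)
    (hmax : ∀ x, G.dist r x ≤ G.dist r v0) :
    ∃ w, G.Adj v0 w ∧ G.dist r w + 1 = G.dist r v0 ∧ (∀ x, G.Adj v0 x → x = w) := by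
  have hc := hT.isConnected
  have hd : 0 < G.dist r v0 := hc.pos_dist_of_ne (Ne.symm hne)
  have key : ∀ x, G.Adj v0 x → G.dist r x + 1 = G.dist r v0 := by
    intro x hx
    have hne' : G.dist r v0 ≠ G.dist r x := tree_adj_dist_ne hT r hx
    have hle : G.dist r x ≤ G.dist r v0 := hmax x
    have h1 : G.dist r v0 ≤ G.dist r x + G.dist x v0 := hc.dist_triangle
    have h2 : G.dist x v0 ≤ 1 := by
      have := SimpleGraph.dist_le (Walk.cons hx.symm Walk.nil)
      simpa using this
    omega
  obtain ⟨q⟩ : G.Reachable v0 r := hc.preconnected v0 r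
  cases q with
  | nil => exact absurd rfl hne
  | @cons _ y _ h q' =>
    exact ⟨y, h, key y h, fun x hx =>
      tree_parent_unique hT r hx h (key x hx) (key y h)⟩

/-- The key structural dichotomy for trees with at least two vertices. -/
lemma tree_structure [Fintype V] (hT : G.IsTree) (h2 : 2 ≤ Fintype.card V) :
    (∃ v a b, a ≠ b ∧ G.Adj v a ∧ (∀ x, G.Adj a x → x = v) ∧
      G.Adj v b ∧ (∀ x, G.Adj b x → x = v)) ∨
    (∃ v u w, G.Adj v u ∧ (∀ x, G.Adj u x → x = v) ∧
      (∀ x, G.Adj v x → x = u ∨ x = w)) := by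
  classical
  have hc := hT.isConnected
  obtain ⟨r⟩ : Nonempty V := hc.nonempty
  obtain ⟨v0, -, hmax0⟩ := Finset.exists_max_image Finset.univ (G.dist r)
    ⟨r, Finset.mem_univ r⟩
  have hmax : ∀ x, G.dist r x ≤ G.dist r v0 := fun x => hmax0 x (Finset.mem_univ x)
  have hpos : 0 < G.dist r v0 := by
    obtain ⟨y, hy⟩ := Fintype.exists_ne_of_one_lt_card (by omega) r
    exact lt_of_lt_of_le (hc.pos_dist_of_ne (Ne.symm hy)) (hmax y)
  have hv0r : v0 ≠ r := by
    rintro rfl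
    rw [SimpleGraph.dist_self] at hpos
    omega
  obtain ⟨v1, hadj01, hd1, hleaf0⟩ := exists_parent hT hv0r hmax
  by_cases hcase : ∃ c, G.Adj v1 c ∧ c ≠ v0 ∧ G.dist r c = G.dist r v0
  · obtain ⟨c, hc1, hcv0, hcd⟩ := hcase
    have hcr : c ≠ r := by
      rintro rfl
      rw [SimpleGraph.dist_self] at hcd
      omega
    have hmaxc : ∀ x, G.dist r x ≤ G.dist r c := fun x => hcd ▸ hmax x
    obtain ⟨w, hcw, -, hleafc⟩ := exists_parent hT hcr hmaxc
    have hwv1 : v1 = w := hleafc v1 hc1.symm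
    have hleafc' : ∀ x, G.Adj c x → x = v1 := fun x hx => (hleafc x hx).trans hwv1.symm
    exact Or.inl ⟨v1, v0, c, fun h => hcv0 h.symm, hadj01.symm, hleaf0, hc1, hleafc'⟩
  · push_neg at hcase
    right
    by_cases hw : ∃ w, G.Adj v1 w ∧ w ≠ v0
    · obtain ⟨w, hw1, hwv0⟩ := hw
      refine ⟨v1, v0, w, hadj01.symm, hleaf0, ?_⟩
      intro x hx
      by_cases hxv0 : x = v0
      · exact Or.inl hxv0
      · have hpar : ∀ y, G.Adj v1 y → y ≠ v0 → G.dist r y + 1 = G.dist r v1 := by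
          intro y hy hyv0
          have hne1 : G.dist r v1 ≠ G.dist r y := tree_adj_dist_ne hT r hy
          have hne2 : G.dist r y ≠ G.dist r v0 := hcase y hy hyv0
          have hle : G.dist r y ≤ G.dist r v0 := hmax y
          have h1 : G.dist r v1 ≤ G.dist r y + G.dist y v1 := hc.dist_triangle
          have h2 : G.dist y v1 ≤ 1 := by
            have := SimpleGraph.dist_le (Walk.cons hy.symm Walk.nil)
            simpa using this
          omega
        exact Or.inr (tree_parent_unique hT r hx hw1 (hpar x hx hxv0) (hpar w hw1 hwv0))
    · push_neg at hw
      exact ⟨v1, v0, v0, hadj01.symm, hleaf0, fun x hx => Or.inl (hw x hx)⟩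

end BondageAux

theorem bondage_tree_le_two [Fintype V] (G : SimpleGraph V)
    (hT : G.IsTree) (h2 : 2 ≤ Fintype.card V) :
    G.bondageNum ≤ 2 := by
  rcases BondageAux.tree_structure hT h2 with
    ⟨v, a, b, hab, ha, hla, hb, hlb⟩ | ⟨v, u, w, hu, hlu, hv⟩
  · exact BondageAux.bondage_case_two_leaves hab ha hla hb hlb
  · exact BondageAux.bondage_case_leaf hu hlu hv
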